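/- For every z in the Hilbert ball B_H, every C¹ curve ψ : [0,1] → B_H with ψ(0) = 0 and ψ(1) = z satisfies L(ψ) ≥ (1/2)·log((1 + ‖z‖)/(1 − ‖z‖)); consequently the Poincaré distance satisfies d(0, z) = (1/2)·log((1 + ‖z‖)/(1 − ‖z‖)), i.e. the straight segment t ↦ t·z is a minimizing geodesic from 0 to z. -/

import Mathlib

/-- The Kähler "energy" integrand on the Hilbert ball:
`K(z,u) = ‖u‖²/(1−‖z‖²) + |⟨z,u⟩|²/(1−‖z‖²)²`. -/
noncomputable def ballK {H : Type*} [NormedAddCommGroup H] [InnerProductSpace ℂ H]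
    (z u : H) : ℝ :=
  ‖u‖ ^ 2 / (1 - ‖z‖ ^ 2) + ‖(inner ℂ z u : ℂ)‖ ^ 2 / (1 - ‖z‖ ^ 2) ^ 2

/-- `ψ` is a C¹ curve in the Hilbert ball with derivative `ψ'`. -/
def IsC1BallCurve {H : Type*} [NormedAddCommGroup H] [InnerProductSpace ℂ H]
    (ψ ψ' : ℝ → H) : Prop :=
  (∀ t ∈ Set.Icc (0 : ℝ) 1, ‖ψ t‖ < 1) ∧
  (∀ t ∈ Set.Icc (0 : ℝ) 1, HasDerivAt ψ (ψ' t) t) ∧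
  ContinuousOn ψ' (Set.Icc (0 : ℝ) 1)

/-- The hyperbolic length of a curve in the Hilbert ball. -/
noncomputable def hypLength {H : Type*} [NormedAddCommGroup H] [InnerProductSpace ℂ H]
    (ψ ψ' : ℝ → H) : ℝ :=
  ∫ t in (0 : ℝ)..1, Real.sqrt (ballK (ψ t) (ψ' t))

/-- The Poincaré distance on the Hilbert ball: the infimum of hyperbolic lengths of C¹
curves joining `u` to `v` inside the ball. -/
noncomputable def pDist {H : Type*} [NormedAddCommGroup H] [InnerProductSpace ℂ H]
    (u v : H) : ℝ :=
  sInf { r | ∃ ψ ψ' : ℝ → H, IsC1BallCurve ψ ψ' ∧ ψ 0 = u ∧ ψ 1 = v ∧ r = hypLength ψ ψ' }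

/-- Inverse hyperbolic tangent, defined by logs. -/
noncomputable def myAtanh (x : ℝ) : ℝ := (1/2) * (Real.log (1+x) - Real.log (1-x))

lemma myAtanh_zero : myAtanh 0 = 0 := by simp [myAtanh]

lemma myAtanh_hasDerivAt {x : ℝ} (h1 : -1 < x) (h2 : x < 1) :
    HasDerivAt myAtanh (1/(1-x^2)) x := by
  have ha : (0:ℝ) < 1 + x := by linarith
  have hb : (0:ℝ) < 1 - x := by linarith
  have d1 : HasDerivAt (fun y : ℝ => Real.log (1+y)) (1/(1+x)) x := by
    have := (Real.hasDerivAt_log ha.ne').comp x ((hasDerivAt_id x).const_add 1)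
    simpa [Function.comp_def] using this
  have d2 : HasDerivAt (fun y : ℝ => Real.log (1-y)) (1/(1-x) * (-1)) x := by
    have := (Real.hasDerivAt_log hb.ne').comp x ((hasDerivAt_id x).const_sub 1)
    simpa [Function.comp_def] using this
  have := ((d1.sub d2).const_mul ((1:ℝ)/2))
  have haz : (1:ℝ)+x ≠ 0 := ha.ne'
  have hbz : (1:ℝ)-x ≠ 0 := hb.ne'
  have hx2 : (1:ℝ)-x^2 ≠ 0 := by nlinarith
  refine this.congr_deriv ?_
  symm
  field_simp
  ring

lemma myAtanh_continuousAt {x : ℝ} (h1 : -1 < x) (h2 : x < 1) :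
    ContinuousAt myAtanh x := by
  have ha : (0:ℝ) < 1 + x := by linarith
  have hb : (0:ℝ) < 1 - x := by linarith
  apply ContinuousAt.mul continuousAt_const
  exact ((Real.continuousAt_log ha.ne').comp (by fun_prop)).sub
    ((Real.continuousAt_log hb.ne').comp (by fun_prop))

lemma myAtanh_eq {x : ℝ} (h2 : x < 1) (h0 : 0 ≤ x) :
    myAtanh x = (1/2) * Real.log ((1+x)/(1-x)) := by
  rw [myAtanh, Real.log_div (by linarith) (by linarith)]

lemma deriv_le_sqrt_ballK {H : Type*} [NormedAddCommGroup H] [InnerProductSpace ℂ H]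
    (x u : H) (e : ℝ) (he : 0 < e) (hx : ‖x‖ < 1) :
    (inner ℂ x u : ℂ).re / (Real.sqrt (‖x‖^2 + e^2) * (1 - ‖x‖^2)) ≤ Real.sqrt (ballK x u) := by
  have hs1 : ‖x‖^2 < 1 := by nlinarith [norm_nonneg x]
  have h1s : (0:ℝ) < 1 - ‖x‖^2 := by linarith
  have hy0 : (0:ℝ) < ‖x‖^2 + e^2 := by positivity
  have hy : (0:ℝ) < Real.sqrt (‖x‖^2 + e^2) := Real.sqrt_pos.2 hy0
  apply Real.le_sqrt_of_sq_le
  have hy2 : Real.sqrt (‖x‖^2 + e^2) ^ 2 = ‖x‖^2 + e^2 := Real.sq_sqrt hy0.le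
  have hR : (inner ℂ x u : ℂ).re ^ 2 ≤ ‖(inner ℂ x u : ℂ)‖ ^ 2 := by
    have := Complex.abs_re_le_norm (inner ℂ x u : ℂ)
    nlinarith [norm_nonneg (inner ℂ x u : ℂ), abs_nonneg (inner ℂ x u : ℂ).re,
      neg_abs_le (inner ℂ x u : ℂ).re, le_abs_self (inner ℂ x u : ℂ).re]
  have ha : ‖(inner ℂ x u : ℂ)‖ ^ 2 ≤ ‖x‖^2 * ‖u‖^2 := by
    have := norm_inner_le_norm (𝕜 := ℂ) x u
    nlinarith [norm_nonneg (inner ℂ x u : ℂ), norm_nonneg x, norm_nonneg u]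
  rw [div_pow, mul_pow, hy2, ballK, div_le_iff₀ (by positivity)]
  have hrw : (‖u‖ ^ 2 / (1 - ‖x‖ ^ 2) + ‖(inner ℂ x u : ℂ)‖ ^ 2 / (1 - ‖x‖ ^ 2) ^ 2) *
      ((‖x‖ ^ 2 + e ^ 2) * (1 - ‖x‖ ^ 2) ^ 2)
      = ‖u‖^2 * (1-‖x‖^2) * (‖x‖^2+e^2) + ‖(inner ℂ x u : ℂ)‖^2 * (‖x‖^2+e^2) := by
    field_simp
  rw [hrw]
  nlinarith [sq_nonneg e, sq_nonneg (‖u‖), mul_nonneg (mul_nonneg (sq_nonneg ‖u‖) h1s.le) (sq_nonneg e),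
    mul_nonneg (norm_nonneg (inner ℂ x u : ℂ)) (norm_nonneg (inner ℂ x u : ℂ)), ha]

lemma length_lower {H : Type*} [NormedAddCommGroup H] [InnerProductSpace ℂ H]
    (z : H) (ψ ψ' : ℝ → H) (hc : IsC1BallCurve ψ ψ') (h0 : ψ 0 = 0) (h1 : ψ 1 = z) :
    myAtanh ‖z‖ ≤ hypLength ψ ψ' := by
  obtain ⟨hball, hder, hcont⟩ := hc
  have hr : ‖z‖ < 1 := h1 ▸ hball 1 (by norm_num)
  have hcψ : ContinuousOn ψ (Set.Icc 0 1) :=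
    fun t ht => (hder t ht).continuousAt.continuousWithinAt
  have hposd : ∀ t ∈ Set.Icc (0:ℝ) 1, (0:ℝ) < 1 - ‖ψ t‖^2 := by
    intro t ht; nlinarith [hball t ht, norm_nonneg (ψ t)]
  have hfc : ContinuousOn (fun t => Real.sqrt (ballK (ψ t) (ψ' t))) (Set.Icc 0 1) := by
    apply Real.continuous_sqrt.comp_continuousOn
    apply ContinuousOn.add
    · exact (hcont.norm.pow 2).div (continuousOn_const.sub ((hcψ.norm).pow 2))
        (fun t ht => (hposd t ht).ne')
    · exact ((continuous_norm.comp_continuousOn (hcψ.inner hcont)).pow 2).div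
        ((continuousOn_const.sub ((hcψ.norm).pow 2)).pow 2)
        (fun t ht => pow_ne_zero _ (hposd t ht).ne')
  have hfi : IntervalIntegrable (fun t => Real.sqrt (ballK (ψ t) (ψ' t)))
      MeasureTheory.volume 0 1 := by
    apply ContinuousOn.intervalIntegrable
    rwa [Set.uIcc_of_le (by norm_num : (0:ℝ) ≤ 1)]
  have main : ∀ e : ℝ, 0 < e →
      (Real.sqrt (1+e^2))⁻¹ * (myAtanh (Real.sqrt (‖z‖^2+e^2) / Real.sqrt (1+e^2))
        - myAtanh (Real.sqrt (0^2+e^2) / Real.sqrt (1+e^2))) ≤ hypLength ψ ψ' := by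
    intro e he
    have hk0 : (0:ℝ) < 1 + e^2 := by positivity
    have hk : 0 < Real.sqrt (1+e^2) := Real.sqrt_pos.2 hk0
    have hk2 : Real.sqrt (1+e^2)^2 = 1+e^2 := Real.sq_sqrt hk0.le
    set k := Real.sqrt (1+e^2) with hkdef
    set φ : ℝ → ℝ := fun t => k⁻¹ * myAtanh (Real.sqrt (‖ψ t‖^2 + e^2) / k) with hφ
    set D : ℝ → ℝ := fun t =>
      (inner ℂ (ψ t) (ψ' t) : ℂ).re / (Real.sqrt (‖ψ t‖^2+e^2) * (1-‖ψ t‖^2)) with hDdef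
    have hderφ : ∀ t ∈ Set.Icc (0:ℝ) 1, HasDerivAt φ (D t) t := by
      intro t ht
      have hyt0 : (0:ℝ) < ‖ψ t‖^2 + e^2 := by positivity
      have hyt : 0 < Real.sqrt (‖ψ t‖^2 + e^2) := Real.sqrt_pos.2 hyt0
      have hyt2 : Real.sqrt (‖ψ t‖^2 + e^2)^2 = ‖ψ t‖^2+e^2 := Real.sq_sqrt hyt0.le
      have h1s : 0 < 1 - ‖ψ t‖^2 := hposd t ht
      have hinner := (hder t ht).inner ℂ (hder t ht)
      have hre := Complex.reCLM.hasFDerivAt.comp_hasDerivAt t hinner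
      have hs : HasDerivAt (fun t => ‖ψ t‖^2 + e^2)
          (2 * (inner ℂ (ψ t) (ψ' t) : ℂ).re) t := by
        have heq : (fun t => ‖ψ t‖^2 + e^2)
            = fun t => Complex.reCLM (inner ℂ (ψ t) (ψ t) : ℂ) + e^2 := by
          funext y
          have := inner_self_eq_norm_sq (𝕜 := ℂ) (ψ y)
          simp only [Complex.reCLM_apply, RCLike.re_to_complex] at this ⊢
          rw [← this]
        rw [heq]
        refine (hre.add_const (e^2)).congr_deriv ?_
        symm
        simp only [Complex.reCLM_apply, Complex.add_re]
        have hsym := inner_re_symm (𝕜 := ℂ) (ψ' t) (ψ t)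
        simp only [RCLike.re_to_complex] at hsym
        rw [hsym]
        ring
      have hy' := (Real.hasDerivAt_sqrt hyt0.ne').comp t hs
      have hdiv := hy'.div_const k
      have hbound : Real.sqrt (‖ψ t‖^2+e^2) / k < 1 := by
        rw [div_lt_one hk]
        exact Real.sqrt_lt_sqrt hyt0.le (by nlinarith)
      have hbnn : (0:ℝ) ≤ Real.sqrt (‖ψ t‖^2+e^2) / k := by positivity
      have hbound2 : (-1:ℝ) < Real.sqrt (‖ψ t‖^2+e^2) / k := by linarith
      have hAt := ((myAtanh_hasDerivAt hbound2 hbound).comp t hdiv).const_mul k⁻¹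
      have hky : 1 - (Real.sqrt (‖ψ t‖^2+e^2)/k)^2 = (1-‖ψ t‖^2)/k^2 := by
        rw [div_pow, hyt2, hk2]
        field_simp
        ring
      refine hAt.congr_deriv ?_
      symm
      rw [hky, hDdef]
      simp only
      field_simp
    have hDc : ContinuousOn D (Set.Icc 0 1) := by
      apply ContinuousOn.div
      · exact Complex.continuous_re.comp_continuousOn (hcψ.inner hcont)
      · exact (Real.continuous_sqrt.comp_continuousOn
          (((hcψ.norm).pow 2).add continuousOn_const)).mul
          (continuousOn_const.sub ((hcψ.norm).pow 2))
      · intro t ht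
        exact (mul_pos (Real.sqrt_pos.2 (by positivity)) (hposd t ht)).ne'
    have hDi : IntervalIntegrable D MeasureTheory.volume 0 1 := by
      apply ContinuousOn.intervalIntegrable
      rwa [Set.uIcc_of_le (by norm_num : (0:ℝ) ≤ 1)]
    have hFTC : ∫ t in (0:ℝ)..1, D t = φ 1 - φ 0 := by
      apply intervalIntegral.integral_eq_sub_of_hasDerivAt
      · intro t ht
        exact hderφ t (by rwa [Set.uIcc_of_le (by norm_num : (0:ℝ) ≤ 1)] at ht)
      · exact hDi
    have hmono : (∫ t in (0:ℝ)..1, D t) ≤ ∫ t in (0:ℝ)..1, Real.sqrt (ballK (ψ t) (ψ' t)) :=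
      intervalIntegral.integral_mono_on (by norm_num) hDi hfi
        (fun t ht => deriv_le_sqrt_ballK (ψ t) (ψ' t) e he (hball t ht))
    have hval : (Real.sqrt (1+e^2))⁻¹ * (myAtanh (Real.sqrt (‖z‖^2+e^2) / Real.sqrt (1+e^2))
        - myAtanh (Real.sqrt (0^2+e^2) / Real.sqrt (1+e^2))) = φ 1 - φ 0 := by
      rw [hφ]
      simp only [h0, h1, norm_zero]
      ring
    rw [hval, hypLength, ← hFTC]
    exact hmono
  set G : ℝ → ℝ := fun e => (Real.sqrt (1+e^2))⁻¹ *
    (myAtanh (Real.sqrt (‖z‖^2+e^2) / Real.sqrt (1+e^2))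
      - myAtanh (Real.sqrt (0^2+e^2) / Real.sqrt (1+e^2))) with hGdef
  have hG0 : G 0 = myAtanh ‖z‖ := by
    rw [hGdef]
    simp [Real.sqrt_sq (norm_nonneg z), myAtanh_zero]
  have hGc : ContinuousAt G 0 := by
    have c1 : ContinuousAt (fun e : ℝ => Real.sqrt (1+e^2)) 0 := by fun_prop
    have h10 : Real.sqrt (1+(0:ℝ)^2) ≠ 0 := by norm_num
    have cd1 : ContinuousAt (fun e : ℝ => Real.sqrt (‖z‖^2+e^2) / Real.sqrt (1+e^2)) 0 :=
      ContinuousAt.div (by fun_prop) c1 h10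
    have cd2 : ContinuousAt (fun e : ℝ => Real.sqrt (0^2+e^2) / Real.sqrt (1+e^2)) 0 :=
      ContinuousAt.div (by fun_prop) c1 h10
    have hv1 : Real.sqrt (‖z‖^2+(0:ℝ)^2) / Real.sqrt (1+(0:ℝ)^2) = ‖z‖ := by
      simp [Real.sqrt_sq (norm_nonneg z)]
    have hv2 : Real.sqrt ((0:ℝ)^2+(0:ℝ)^2) / Real.sqrt (1+(0:ℝ)^2) = 0 := by
      simp
    apply ContinuousAt.mul (c1.inv₀ h10)
    apply ContinuousAt.sub
    · have hmy : ContinuousAt myAtanh (Real.sqrt (‖z‖^2+(0:ℝ)^2) / Real.sqrt (1+(0:ℝ)^2)) := by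
        rw [hv1]
        exact myAtanh_continuousAt (lt_of_lt_of_le (by norm_num) (norm_nonneg z)) hr
      exact ContinuousAt.comp (f := fun e : ℝ => Real.sqrt (‖z‖^2+e^2) / Real.sqrt (1+e^2)) (x := (0:ℝ)) hmy cd1
    · have hmy : ContinuousAt myAtanh (Real.sqrt ((0:ℝ)^2+(0:ℝ)^2) / Real.sqrt (1+(0:ℝ)^2)) := by
        rw [hv2]
        exact myAtanh_continuousAt (by norm_num) (by norm_num)
      exact ContinuousAt.comp (f := fun e : ℝ => Real.sqrt ((0:ℝ)^2+e^2) / Real.sqrt (1+e^2)) (x := (0:ℝ)) hmy cd2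
  have htend : Filter.Tendsto G (nhdsWithin 0 (Set.Ioi 0)) (nhds (myAtanh ‖z‖)) := by
    rw [← hG0]
    exact hGc.continuousWithinAt.tendsto
  exact le_of_tendsto htend
    (Filter.eventually_of_mem self_mem_nhdsWithin (fun e he => main e he))

lemma radial_length {H : Type*} [NormedAddCommGroup H] [InnerProductSpace ℂ H]
    (z : H) (hz : ‖z‖ < 1) :
    hypLength (fun t : ℝ => t • z) (fun _ => z) = myAtanh ‖z‖ := by
  have hr0 : (0:ℝ) ≤ ‖z‖ := norm_nonneg z
  have hpos : ∀ t ∈ Set.uIcc (0:ℝ) 1, (0:ℝ) < 1 - (t*‖z‖)^2 := by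
    intro t ht
    rw [Set.uIcc_of_le (by norm_num : (0:ℝ) ≤ 1)] at ht
    obtain ⟨ht0, ht1⟩ := ht
    have h2 : t*‖z‖ ≤ ‖z‖ := by nlinarith [mul_le_mul_of_nonneg_right ht1 hr0]
    have h3 : 0 ≤ t*‖z‖ := mul_nonneg ht0 hr0
    nlinarith
  have hcong : ∀ t ∈ Set.uIcc (0:ℝ) 1,
      Real.sqrt (ballK ((fun t : ℝ => t • z) t) ((fun _ : ℝ => z) t))
        = 1/(1-(t*‖z‖)^2) * ‖z‖ := by
    intro t ht
    have hp := hpos t ht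
    rw [Set.uIcc_of_le (by norm_num : (0:ℝ) ≤ 1)] at ht
    obtain ⟨ht0, ht1⟩ := ht
    have hnorm : ‖t • z‖ = t * ‖z‖ := by
      rw [norm_smul, Real.norm_eq_abs, abs_of_nonneg ht0]
    have hinner : ‖(inner ℂ (t • z) z : ℂ)‖ = t * ‖z‖^2 := by
      rw [RCLike.real_smul_eq_coe_smul (K := ℂ), inner_smul_real_left,
        inner_self_eq_norm_sq_to_K]
      rw [Complex.real_smul, norm_mul, norm_pow]
      simp [Complex.norm_real, abs_of_nonneg ht0, abs_norm]
    have hb : ballK (t • z) z = (1/(1-(t*‖z‖)^2) * ‖z‖)^2 := by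
      rw [ballK, hnorm, hinner]
      have : (0:ℝ) < 1 - (t*‖z‖)^2 := hp
      field_simp
      ring
    rw [hb, Real.sqrt_sq (by positivity)]
  rw [hypLength, intervalIntegral.integral_congr hcong]
  have hFTC : ∫ t in (0:ℝ)..1, 1/(1-(t*‖z‖)^2) * ‖z‖
      = myAtanh (1*‖z‖) - myAtanh (0*‖z‖) := by
    apply intervalIntegral.integral_eq_sub_of_hasDerivAt
      (f := fun t : ℝ => myAtanh (t * ‖z‖))
    · intro t ht
      rw [Set.uIcc_of_le (by norm_num : (0:ℝ) ≤ 1)] at ht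
      obtain ⟨ht0, ht1⟩ := ht
      have hb2 : t*‖z‖ < 1 := by nlinarith [mul_le_mul_of_nonneg_right ht1 hr0, mul_nonneg ht0 hr0]
      have hb1 : -1 < t*‖z‖ := by nlinarith [mul_nonneg ht0 hr0]
      have hc := (myAtanh_hasDerivAt hb1 hb2).comp t (hasDerivAt_mul_const ‖z‖)
      exact hc
    · apply ContinuousOn.intervalIntegrable
      apply ContinuousOn.mul _ continuousOn_const
      apply ContinuousOn.div continuousOn_const (by fun_prop)
      intro t ht
      exact (hpos t ht).ne'
  rw [hFTC, one_mul, zero_mul, myAtanh_zero, sub_zero]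

theorem radial_curve_is_minimizing
    {H : Type*} [NormedAddCommGroup H] [InnerProductSpace ℂ H]
    (z : H) (hz : ‖z‖ < 1) :
    (∀ ψ ψ' : ℝ → H, IsC1BallCurve ψ ψ' → ψ 0 = 0 → ψ 1 = z →
      (1 / 2) * Real.log ((1 + ‖z‖) / (1 - ‖z‖)) ≤ hypLength ψ ψ') ∧
    pDist (0 : H) z = (1 / 2) * Real.log ((1 + ‖z‖) / (1 - ‖z‖)) := by
  have hkey : (1 / 2) * Real.log ((1 + ‖z‖) / (1 - ‖z‖)) = myAtanh ‖z‖ :=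
    (myAtanh_eq hz (norm_nonneg z)).symm
  rw [hkey]
  constructor
  · intro ψ ψ' hc h0 h1
    exact length_lower z ψ ψ' hc h0 h1
  · have hradial : IsC1BallCurve (fun t : ℝ => t • z) (fun _ : ℝ => z) := by
      refine ⟨?_, ?_, continuousOn_const⟩
      · intro t ht
        rw [norm_smul, Real.norm_eq_abs, abs_of_nonneg ht.1]
        calc t * ‖z‖ ≤ 1 * ‖z‖ := by
              exact mul_le_mul_of_nonneg_right ht.2 (norm_nonneg z)
          _ < 1 := by rwa [one_mul]
      · intro t _
        simpa using (hasDerivAt_id t).smul_const z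
    have hmem : myAtanh ‖z‖ ∈ { r | ∃ ψ ψ' : ℝ → H, IsC1BallCurve ψ ψ' ∧ ψ 0 = 0 ∧
        ψ 1 = z ∧ r = hypLength ψ ψ' } := by
      exact ⟨fun t : ℝ => t • z, fun _ : ℝ => z, hradial, by simp, by simp,
        (radial_length z hz).symm⟩
    have hlb : ∀ x ∈ { r | ∃ ψ ψ' : ℝ → H, IsC1BallCurve ψ ψ' ∧ ψ 0 = 0 ∧
        ψ 1 = z ∧ r = hypLength ψ ψ' }, myAtanh ‖z‖ ≤ x := by
      rintro x ⟨ψ, ψ', hc, h0, h1, rfl⟩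
      exact length_lower z ψ ψ' hc h0 h1
    exact le_antisymm (csInf_le ⟨_, hlb⟩ hmem) (le_csInf ⟨_, hmem⟩ hlb)
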